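/- Let 0 < β < min(2, k). There exists a constant C̃ > 0 such that for any 0 < ε ≤ s ≤ t and x ∈ ℝ^k, ∫_{s-ε}^{s} ∫_{ℝ^k} ‖ξ‖^{β-k} |𝓕S(t-r, x-·)(ξ)|² dξ dr ≤ C̃ ε^{(2-β)/2}. -/

import Mathlib

open MeasureTheory Real Set
noncomputable section

/-- The heat kernel `S(t,x) = (2πt)^{-k/2} exp(-‖x‖²/(2t))` on `ℝ^k`. -/
def heatKernel (k : ℕ) (t : ℝ) (x : EuclideanSpace ℝ (Fin k)) : ℝ :=
  (2 * π * t) ^ (-(k : ℝ) / 2) * Real.exp (-‖x‖ ^ 2 / (2 * t))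

/-- The spatial Fourier transform of `y ↦ S(t, x - y)` evaluated at `ξ`. -/
def fourierHeat (k : ℕ) (t : ℝ) (x ξ : EuclideanSpace ℝ (Fin k)) : ℂ :=
  ∫ y : EuclideanSpace ℝ (Fin k),
    Complex.exp (-2 * π * Complex.I * ((inner ℝ ξ y : ℝ) : ℂ)) * (heatKernel k t (x - y) : ℂ)

lemma abs_fourierHeat (k : ℕ) {t : ℝ} (ht : 0 < t) (x ξ : EuclideanSpace ℝ (Fin k)) :
    ‖fourierHeat k t x ξ‖ = Real.exp (-(2 * π ^ 2 * t) * ‖ξ‖ ^ 2) := by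
  have hb : (0:ℝ) < ((((1:ℝ)/(2*t) : ℝ)) : ℂ).re := by
    simp only [Complex.ofReal_re]
    positivity
  have key : fourierHeat k t x ξ
      = (Complex.exp (-2*π*Complex.I*((inner ℝ ξ x : ℝ):ℂ)) * (((2*π*t)^(-(k:ℝ)/2) : ℝ) : ℂ))
        * ∫ y : EuclideanSpace ℝ (Fin k),
            Complex.exp (-(((1:ℝ)/(2*t):ℝ):ℂ) * (‖y‖:ℂ)^2 + (2*π*Complex.I) * ((inner ℝ ξ y : ℝ):ℂ)) := by
    rw [fourierHeat,
      ← integral_sub_left_eq_self (fun y => Complex.exp (-2*π*Complex.I*((inner ℝ ξ y : ℝ):ℂ))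
        * (heatKernel k t (x - y) : ℂ)) volume x,
      ← integral_const_mul]
    refine integral_congr_ae (Filter.EventuallyEq.of_eq (funext fun y => ?_))
    simp only [heatKernel, sub_sub_cancel, inner_sub_right]
    push_cast
    have htC : (t:ℂ) ≠ 0 := by exact_mod_cast ht.ne'
    rw [mul_left_comm, ← Complex.exp_add]
    conv_rhs => rw [mul_right_comm, ← Complex.exp_add, mul_comm]
    congr 1
    field_simp
    ring
  rw [key]
  rw [GaussianFourier.integral_cexp_neg_mul_sq_norm_add hb (2*π*Complex.I) ξ]
  have h2t : (0:ℝ) < 2*π*t := by positivity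
  have htC : (t:ℂ) ≠ 0 := by exact_mod_cast ht.ne'
  have e1 : ((π:ℂ) / ((((1:ℝ)/(2*t):ℝ)) : ℂ)) = ((2*π*t : ℝ):ℂ) := by
    push_cast; field_simp
  have e2 : (2*(π:ℂ)*Complex.I)^2 * (‖ξ‖:ℂ)^2 / (4 * ((((1:ℝ)/(2*t):ℝ)):ℂ))
      = ((-(2*π^2*t) * ‖ξ‖^2 : ℝ):ℂ) := by
    push_cast
    rw [mul_pow, mul_pow, Complex.I_sq]
    field_simp
    ring
  rw [e1, e2, norm_mul, norm_mul, norm_mul, Complex.norm_exp, Complex.norm_exp, Complex.norm_real, Real.norm_eq_abs,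
    Complex.norm_cpow_eq_rpow_re_of_pos h2t]
  have hre0 : (-2*(π:ℂ)*Complex.I*((inner ℝ ξ x : ℝ):ℂ)).re = 0 := by simp
  have hre1 : (((-(2*π^2*t) * ‖ξ‖^2 : ℝ)) : ℂ).re = -(2*π^2*t) * ‖ξ‖^2 := Complex.ofReal_re _
  have hre2 : ((Module.finrank ℝ (EuclideanSpace ℝ (Fin k)) / 2 : ℂ)).re = (k:ℝ)/2 := by
    simp [finrank_euclideanSpace_fin]
  rw [hre0, hre1, hre2, Real.exp_zero, abs_of_nonneg (Real.rpow_nonneg h2t.le _), one_mul,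
    ← mul_assoc, ← Real.rpow_add h2t]
  rw [show -(k:ℝ)/2 + (k:ℝ)/2 = 0 by ring, Real.rpow_zero, one_mul]

lemma inner_integral_eq (k : ℕ) (β : ℝ) {u : ℝ} (hu : 0 < u) (x : EuclideanSpace ℝ (Fin k)) :
    (∫ ξ : EuclideanSpace ℝ (Fin k),
        ‖ξ‖ ^ (β - (k : ℝ)) * ‖fourierHeat k u x ξ‖ ^ 2)
      = u ^ (-β/2) * ∫ ξ : EuclideanSpace ℝ (Fin k),
          ‖ξ‖ ^ (β - (k : ℝ)) * rexp (-(4*π^2) * ‖ξ‖^2) := by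
  set c : ℝ := ∫ ξ : EuclideanSpace ℝ (Fin k), ‖ξ‖ ^ (β - (k : ℝ)) * rexp (-(4*π^2) * ‖ξ‖^2) with hcdef
  set R : ℝ := u ^ ((1:ℝ)/2) with hRdef
  have hRpos : 0 < R := Real.rpow_pos_of_pos hu _
  have hR2 : R ^ (2:ℕ) = u := by
    rw [hRdef, ← Real.rpow_natCast (u ^ ((1:ℝ)/2)) 2, ← Real.rpow_mul hu.le]
    norm_num
  have step1 : (∫ ξ : EuclideanSpace ℝ (Fin k), ‖ξ‖ ^ (β - (k : ℝ)) * ‖fourierHeat k u x ξ‖ ^ 2)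
      = ∫ ξ : EuclideanSpace ℝ (Fin k), ‖ξ‖ ^ (β - (k : ℝ)) * rexp (-(4*π^2*u) * ‖ξ‖^2) := by
    refine integral_congr_ae (Filter.EventuallyEq.of_eq (funext fun ξ => ?_))
    rw [abs_fourierHeat k hu x ξ, sq, ← Real.exp_add]
    congr 2
    ring
  have hs : R ^ (β - (k:ℝ)) * (∫ ξ : EuclideanSpace ℝ (Fin k), ‖ξ‖ ^ (β - (k : ℝ)) * rexp (-(4*π^2*u) * ‖ξ‖^2))
      = (R ^ Module.finrank ℝ (EuclideanSpace ℝ (Fin k)))⁻¹ * c := by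
    rw [← integral_const_mul, hcdef]
    conv_rhs => rw [← smul_eq_mul]
    rw [← MeasureTheory.Measure.integral_comp_smul_of_nonneg (volume)
        (fun ξ : EuclideanSpace ℝ (Fin k) => ‖ξ‖ ^ (β - (k : ℝ)) * rexp (-(4*π^2) * ‖ξ‖^2)) R (hR := hRpos.le)]
    refine integral_congr_ae (Filter.EventuallyEq.of_eq (funext fun ξ => ?_))
    have hn : ‖R • ξ‖ = R * ‖ξ‖ := by
      rw [norm_smul, Real.norm_eq_abs, abs_of_nonneg hRpos.le]
    simp only [hn]
    rw [Real.mul_rpow hRpos.le (norm_nonneg _), mul_pow, hR2]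
    ring
  have hfr : Module.finrank ℝ (EuclideanSpace ℝ (Fin k)) = k := finrank_euclideanSpace_fin
  have hRb : R ^ (β - (k:ℝ)) ≠ 0 := (Real.rpow_pos_of_pos hRpos _).ne'
  have step2 : (∫ ξ : EuclideanSpace ℝ (Fin k), ‖ξ‖ ^ (β - (k : ℝ)) * rexp (-(4*π^2*u) * ‖ξ‖^2))
      = (R ^ (β - (k:ℝ)))⁻¹ * ((R ^ Module.finrank ℝ (EuclideanSpace ℝ (Fin k)))⁻¹ * c) := by
    rw [← hs, inv_mul_cancel_left₀ hRb]
  have hpow : (R ^ (β - (k:ℝ)))⁻¹ * ((R ^ (k:ℕ))⁻¹) = u ^ (-β/2) := by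
    rw [hRdef, ← Real.rpow_natCast (u ^ ((1:ℝ)/2)) k, ← Real.rpow_mul hu.le,
      ← Real.rpow_mul hu.le, ← Real.rpow_neg hu.le, ← Real.rpow_neg hu.le,
      ← Real.rpow_add hu]
    congr 1
    ring
  rw [step1, step2, hfr, ← mul_assoc, hpow]

lemma rpow_add_le_add_rpow' {a b q : ℝ} (ha : 0 ≤ a) (hb : 0 ≤ b) (h0 : 0 ≤ q) (h1 : q ≤ 1) :
    (a + b) ^ q ≤ a ^ q + b ^ q := by
  have h := NNReal.rpow_add_le_add_rpow a.toNNReal b.toNNReal h0 h1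
  rw [← NNReal.coe_le_coe] at h
  push_cast at h
  rwa [Real.coe_toNNReal _ ha, Real.coe_toNNReal _ hb] at h

/-- Lemma A.1, upper bound: there is `C̃ > 0` such that for all `0 < ε ≤ s ≤ t` and `x`,
`∫_{s-ε}^{s} ∫ ‖ξ‖^{β-k} |𝓕S(t-r, x-·)(ξ)|² dξ dr ≤ C̃ ε^{(2-β)/2}`. -/
theorem heat_riesz_integral_upper (k : ℕ) (hk : 1 ≤ k) (β : ℝ) (hβ0 : 0 < β)
    (hβ : β < min 2 (k : ℝ)) :
    ∃ C : ℝ, 0 < C ∧ ∀ (ε s t : ℝ) (x : EuclideanSpace ℝ (Fin k)),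
      0 < ε → ε ≤ s → s ≤ t →
      (∫ r in Set.Ioc (s - ε) s, ∫ ξ : EuclideanSpace ℝ (Fin k),
          ‖ξ‖ ^ (β - (k : ℝ)) * ‖fourierHeat k (t - r) x ξ‖ ^ 2)
        ≤ C * ε ^ ((2 - β) / 2) := by
  have hβ2 : β < 2 := lt_of_lt_of_le hβ (min_le_left _ _)
  set q : ℝ := (2 - β) / 2 with hqdef
  have hq0 : 0 < q := by rw [hqdef]; linarith
  have hq1 : q ≤ 1 := by rw [hqdef]; linarith
  set c : ℝ := ∫ ξ : EuclideanSpace ℝ (Fin k), ‖ξ‖ ^ (β - (k : ℝ)) * rexp (-(4*π^2) * ‖ξ‖^2) with hcdef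
  have hc0 : 0 ≤ c := integral_nonneg fun ξ => by positivity
  refine ⟨c / q + 1, by positivity, fun ε s t x hε hεs hst => ?_⟩
  have key : Set.EqOn
      (fun r => ∫ ξ : EuclideanSpace ℝ (Fin k), ‖ξ‖ ^ (β - (k : ℝ)) * ‖fourierHeat k (t - r) x ξ‖ ^ 2)
      (fun r => (t - r) ^ (-β/2) * c) (Set.Ioc (s - ε) s) := by
    intro r hr
    rcases (sub_nonneg.2 (hr.2.trans hst)).lt_or_eq with hu | hu
    · exact inner_integral_eq k β hu x
    · have h0 : t - r = 0 := hu.symm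
      simp only [h0]
      rw [Real.zero_rpow (div_ne_zero (neg_ne_zero.2 hβ0.ne') two_ne_zero), zero_mul]
      have hker : ∀ y : EuclideanSpace ℝ (Fin k), heatKernel k 0 y = 0 := by
        intro y
        rw [heatKernel, mul_zero, Real.zero_rpow, zero_mul]
        simp only [ne_eq, div_eq_zero_iff, neg_eq_zero, Nat.cast_eq_zero]
        push_neg
        exact ⟨by omega, by norm_num⟩
      have hfh : ∀ ξ : EuclideanSpace ℝ (Fin k), fourierHeat k 0 x ξ = 0 := by
        intro ξ
        rw [fourierHeat]
        simp [hker]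
      simp [hfh]
  rw [MeasureTheory.setIntegral_congr_fun measurableSet_Ioc key,
    ← intervalIntegral.integral_of_le (by linarith : s - ε ≤ s),
    intervalIntegral.integral_mul_const,
    intervalIntegral.integral_comp_sub_left (fun u => u ^ (-β/2)) t,
    integral_rpow (Or.inl (by linarith : (-1:ℝ) < -β/2))]
  have hq' : -β/2 + 1 = q := by rw [hqdef]; ring
  rw [hq']
  have hA : 0 ≤ t - s := by linarith
  have hts : t - (s - ε) = (t - s) + ε := by ring
  rw [hts]
  have hsub : ((t - s) + ε) ^ q - (t - s) ^ q ≤ ε ^ q := by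
    have := rpow_add_le_add_rpow' hA hε.le hq0.le hq1
    linarith
  have hεq : 0 ≤ ε ^ q := Real.rpow_nonneg hε.le _
  have hAq : 0 ≤ ((t - s) + ε) ^ q - (t - s) ^ q := by
    have := Real.rpow_le_rpow hA (by linarith : t - s ≤ (t - s) + ε) hq0.le
    linarith
  calc (((t - s) + ε) ^ q - (t - s) ^ q) / q * c
      ≤ ε ^ q / q * c := by gcongr
    _ = c / q * ε ^ q := by ring
    _ ≤ (c / q + 1) * ε ^ q := by nlinarith
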